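/- For s = 0 and s = 1, the sum over n ≥ 0 of q^(n² + sn)/(q;q)_n equals the product over all n ≥ 1 with n ≡ ±(s+1) mod 5 of 1/(1-q^n) (the Rogers-Ramanujan identities), as an identity of formal power series in q. -/

import Mathlib

/-!
The Rogers-Ramanujan identities, as identities of formal power series in `q`.
Infinite sums and products of formal power series are interpreted via the
(coefficientwise) topology on `PowerSeries ℚ` induced by the coefficient maps.
-/

noncomputable section
open PowerSeries Finset

abbrev K : Type := LaurentSeries ℚ

/-- `Qz e = q^e` as a Laurent series, for `e : ℤ`. -/
def Qz (e : ℤ) : K := HahnSeries.single e 1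

lemma Qz_mul (a b : ℤ) : Qz a * Qz b = Qz (a + b) := by
  simp [Qz, HahnSeries.single_mul_single]

lemma Qz_zero : Qz 0 = 1 := rfl

lemma Qz_ne_zero (a : ℤ) : Qz a ≠ 0 := by
  simp [Qz, HahnSeries.single_ne_zero]

lemma Qz_pow (a : ℤ) (k : ℕ) : Qz a ^ k = Qz (a * k) := by
  induction k with
  | zero => simp [Qz_zero]
  | succ k ih => rw [pow_succ, ih, Qz_mul]; congr 1; push_cast; ring

lemma one_sub_Qz_ne_zero {a : ℤ} (ha : a ≠ 0) : 1 - Qz a ≠ 0 := by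
  intro h
  have := congrArg (fun f : K => f.coeff a) h
  simp [Qz, HahnSeries.coeff_single_same, HahnSeries.coeff_sub, HahnSeries.coeff_one, ha] at this

/-- `(q^e; q^e)_n` in `K`. -/
def pochK (e : ℤ) (n : ℕ) : K := ∏ i ∈ range n, (1 - Qz (e * (i + 1)))

lemma pochK_zero (e : ℤ) : pochK e 0 = 1 := by simp [pochK]

lemma pochK_succ (e : ℤ) (n : ℕ) :
    pochK e (n + 1) = pochK e n * (1 - Qz (e * (n + 1))) := by
  simp [pochK, Finset.prod_range_succ]

lemma pochK_ne_zero {e : ℤ} (he : 0 < e) (n : ℕ) : pochK e n ≠ 0 := by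
  refine Finset.prod_ne_zero_iff.2 fun i _ => one_sub_Qz_ne_zero ?_
  positivity

/-- The Gaussian binomial `[n, k]` with base `q^e`, `ℤ`-indexed in `k`,
zero outside `0 ≤ k ≤ n`. -/
def gz (e : ℤ) (n : ℕ) (k : ℤ) : K :=
  if 0 ≤ k ∧ k ≤ n then pochK e n / (pochK e k.toNat * pochK e (n - k.toNat)) else 0

lemma gz_of_neg (e : ℤ) (n : ℕ) {k : ℤ} (h : k < 0) : gz e n k = 0 := by
  unfold gz; rw [if_neg (by omega)]

lemma gz_of_gt (e : ℤ) (n : ℕ) {k : ℤ} (h : (n : ℤ) < k) : gz e n k = 0 := by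
  unfold gz; rw [if_neg (by omega)]

lemma gz_eq (e : ℤ) (n : ℕ) (a : ℕ) (h : a ≤ n) :
    gz e n a = pochK e n / (pochK e a * pochK e (n - a)) := by
  simp [gz, Int.toNat_natCast, h, Int.ofNat_le.2 h]

lemma gz_zero {e : ℤ} (he : 0 < e) (n : ℕ) : gz e n 0 = 1 := by
  have h := gz_eq e n 0 n.zero_le
  simpa [pochK_zero, div_self (pochK_ne_zero he n)] using h

lemma gz_self {e : ℤ} (he : 0 < e) (n : ℕ) : gz e n n = 1 := by
  have h := gz_eq e n n le_rfl
  simpa [pochK_zero, div_self (pochK_ne_zero he n)] using h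

/-- first q-Pascal identity: `[n+1,k] = [n,k] + q^{e(n+1-k)} [n,k-1]`. -/
lemma gz_pascal1 {e : ℤ} (he : 0 < e) (n : ℕ) (k : ℤ) :
    gz e (n + 1) k = gz e n k + Qz (e * (n + 1 - k)) * gz e n (k - 1) := by
  rcases lt_or_ge k 0 with hk | hk
  · rw [gz_of_neg _ _ hk, gz_of_neg _ _ hk, gz_of_neg _ _ (by omega)]; ring
  rcases eq_or_lt_of_le hk with hk0 | hkpos
  · rw [← hk0, gz_zero he, gz_zero he, gz_of_neg _ _ (by omega)]; ring
  rcases lt_or_ge (n + 1 : ℤ) k with hkn | hkn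
  · rw [gz_of_gt _ _ (by push_cast; omega), gz_of_gt _ _ (by omega),
      gz_of_gt _ _ (by omega)]; ring
  rcases eq_or_lt_of_le hkn with hke | hke
  · -- k = n+1
    have h1 : k = ((n : ℤ) + 1) := hke
    have h2 : gz e (n+1) k = 1 := by rw [h1]; exact_mod_cast gz_self he (n+1)
    have h3 : gz e n k = 0 := gz_of_gt _ _ (by omega)
    have h4 : gz e n (k - 1) = 1 := by
      have : k - 1 = (n : ℤ) := by omega
      rw [this]; exact gz_self he n
    rw [h2, h3, h4, h1]
    simp [Qz_zero]
  · -- 1 ≤ k ≤ n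
    obtain ⟨a, rfl⟩ : ∃ a : ℕ, k = (a : ℤ) := ⟨k.toNat, by omega⟩
    have ha1 : 1 ≤ a := by exact_mod_cast hkpos
    have han : a ≤ n := by exact_mod_cast (by omega : (a : ℤ) ≤ n)
    obtain ⟨b, rfl⟩ : ∃ b, a = b + 1 := ⟨a - 1, by omega⟩
    obtain ⟨c, rfl⟩ : ∃ c, n = (b + 1) + c := ⟨n - (b+1), by omega⟩
    have e1 : gz e (b+1+c+1) (b+1 : ℕ) = pochK e (b+1+c+1) / (pochK e (b+1) * pochK e (c+1)) := by
      have h := gz_eq e (b+1+c+1) (b+1) (by omega)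
      rwa [show b+1+c+1 - (b+1) = c+1 by omega] at h
    have e2 : gz e (b+1+c) (b+1 : ℕ) = pochK e (b+1+c) / (pochK e (b+1) * pochK e c) := by
      have h := gz_eq e (b+1+c) (b+1) (by omega)
      rwa [show b+1+c - (b+1) = c by omega] at h
    have e3 : gz e (b+1+c) ((b+1 : ℕ) - 1 : ℤ) = pochK e (b+1+c) / (pochK e b * pochK e (c+1)) := by
      have h1 : ((b+1 : ℕ) : ℤ) - 1 = (b : ℕ) := by push_cast; ring
      rw [h1]
      have h := gz_eq e (b+1+c) b (by omega)
      rwa [show b+1+c - b = c+1 by omega] at h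
    rw [e1, e2, e3]
    set A := pochK e b with hA
    set B := pochK e c with hB
    set P := pochK e (b+1+c) with hP
    have hx : pochK e (b+1) = A * (1 - Qz (e * (b+1))) := pochK_succ e b
    have hy : pochK e (c+1) = B * (1 - Qz (e * (c+1))) := pochK_succ e c
    have hz : pochK e (b+1+c+1) = P * (1 - Qz (e * (b+1)) * Qz (e * (c+1))) := by
      rw [pochK_succ e (b+1+c), Qz_mul]
      congr 2
      push_cast
      ring
    rw [hx, hy, hz]
    have hA0 : A ≠ 0 := pochK_ne_zero he _
    have hB0 : B ≠ 0 := pochK_ne_zero he _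
    have hx0 : 1 - Qz (e * (b+1)) ≠ 0 := one_sub_Qz_ne_zero (by positivity)
    have hy0 : 1 - Qz (e * (c+1)) ≠ 0 := one_sub_Qz_ne_zero (by positivity)
    have hq : Qz (e * ((b+1+c : ℕ) + 1 - (b+1:ℕ))) = Qz (e * (c+1)) := by
      congr 1; push_cast; ring
    rw [hq]
    field_simp
    ring

/-- second q-Pascal identity: `[n+1,k] = q^{ek} [n,k] + [n,k-1]`. -/
lemma gz_pascal2 {e : ℤ} (he : 0 < e) (n : ℕ) (k : ℤ) :
    gz e (n + 1) k = Qz (e * k) * gz e n k + gz e n (k - 1) := by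
  induction n generalizing k with
  | zero =>
    rcases lt_trichotomy k 0 with hk | hk | hk
    · rw [gz_of_neg _ _ hk, gz_of_neg _ _ hk, gz_of_neg _ _ (by omega)]; ring
    · subst hk
      rw [gz_zero he, gz_zero he, gz_of_neg _ _ (by norm_num)]
      rw [mul_zero, Qz_zero]
      ring
    · rcases eq_or_lt_of_le (by omega : (1:ℤ) ≤ k) with hk1 | hk1
      · rw [← hk1, show (1:ℤ) - 1 = 0 by ring, gz_zero he,
          show gz e 0 (1:ℤ) = 0 from gz_of_gt _ _ (by norm_num),
          show gz e 1 (1:ℤ) = 1 from mod_cast gz_self he 1]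
        ring
      · rw [gz_of_gt _ _ (by push_cast; omega), gz_of_gt _ _ (by omega),
          gz_of_gt _ _ (by omega)]
        ring
  | succ n ih =>
    rw [gz_pascal1 he (n+1) k]
    have B := ih k
    have C := ih (k-1)
    have D := gz_pascal1 he n k
    have F := gz_pascal1 he n (k-1)
    have hprod : Qz (e * k) * Qz (e * (↑n + 1 - k))
        = Qz (e * (↑(n+1) + 1 - k)) * Qz (e * (k - 1)) := by
      rw [Qz_mul, Qz_mul]; congr 1; push_cast; ring
    have heps : Qz (e * (↑n + 1 - (k-1))) = Qz (e * (↑(n+1) + 1 - k)) := by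
      congr 1; push_cast; ring
    rw [heps] at F
    linear_combination B - Qz (e*k) * D - F + Qz (e * (↑(n+1) + 1 - k)) * C
      - gz e n (k-1) * hprod
/-- mixed difference: `[n+1,m+1] - [n+1,m] = q^{e(m+1)} [n,m+1] - q^{e(n+1-m)} [n,m-1]`. -/
lemma gz_diff {e : ℤ} (he : 0 < e) (n : ℕ) (m : ℤ) :
    gz e (n+1) (m+1) - gz e (n+1) m
      = Qz (e * (m+1)) * gz e n (m+1) - Qz (e * (n+1-m)) * gz e n (m-1) := by
  have h1 := gz_pascal2 he n (m+1)
  have h2 := gz_pascal1 he n m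
  rw [show m + 1 - 1 = m by ring] at h1
  linear_combination h1 - h2

/-- Gauss's q-binomial theorem (finite form). -/
lemma gauss {e : ℤ} (he : 0 < e) (z : K) (m : ℕ) :
    ∏ i ∈ Finset.range m, (1 + z * Qz (e * i))
      = ∑ k ∈ Finset.range (m+1), Qz (e * (Nat.choose k 2)) * z^k * gz e m k := by
  induction m with
  | zero => simp [gz_zero he, Qz_zero]
  | succ m ih =>
    rw [Finset.prod_range_succ, ih]
    have expand : ∀ k : ℕ, (Qz (e * (Nat.choose k 2)) * z^k * gz e (m+1) k : K)
        = Qz (e * (Nat.choose k 2)) * z^k * gz e m k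
          + Qz (e * (Nat.choose k 2)) * z^k * (Qz (e * (m+1-(k:ℤ))) * gz e m ((k:ℤ)-1)) := by
      intro k
      rw [gz_pascal1 he m k]
      push_cast
      ring
    rw [Finset.sum_congr rfl (fun k _ => expand k), Finset.sum_add_distrib]
    -- first sum: drop the top (k = m+1) vanishing term
    have hfirst : ∑ k ∈ Finset.range (m+2), (Qz (e * (Nat.choose k 2)) * z^k * gz e m k : K)
        = ∑ k ∈ Finset.range (m+1), Qz (e * (Nat.choose k 2)) * z^k * gz e m k := by
      rw [Finset.sum_range_succ, gz_of_gt _ _ (by exact_mod_cast Nat.lt_succ_self m)]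
      simp
    -- second sum: shift the index down by one
    have hsecond : ∑ k ∈ Finset.range (m+2),
          (Qz (e * (Nat.choose k 2)) * z^k * (Qz (e * (m+1-(k:ℤ))) * gz e m ((k:ℤ)-1)) : K)
        = ∑ k ∈ Finset.range (m+1),
            (z * Qz (e * m)) * (Qz (e * (Nat.choose k 2)) * z^k * gz e m k) := by
      rw [Finset.sum_range_succ' _ (m+1)]
      have h0 : (Qz (e * (Nat.choose 0 2)) * z^0 * (Qz (e * (m+1-((0:ℕ):ℤ))) * gz e m (((0:ℕ):ℤ)-1)) : K) = 0 := by
        rw [gz_of_neg _ _ (by norm_num)]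
        ring
      rw [h0, add_zero]
      refine Finset.sum_congr rfl fun k _ => ?_
      have hidx : ((k+1 : ℕ) : ℤ) - 1 = (k : ℤ) := by push_cast; ring
      rw [hidx]
      have hexp : (Qz (e * (Nat.choose (k+1) 2)) * Qz (e * (m+1-((k+1:ℕ):ℤ))) : K)
          = Qz (e * m) * Qz (e * (Nat.choose k 2)) := by
        rw [Qz_mul, Qz_mul]
        congr 1
        have h2 : (Nat.choose (k+1) 2) = (Nat.choose k 2) + k := by
          rw [Nat.choose_succ_succ k 1, Nat.choose_one_right, Nat.add_comm]
        rw [h2]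
        push_cast
        ring
      calc Qz (e * (Nat.choose (k+1) 2)) * z^(k+1) * (Qz (e * (m+1-((k+1:ℕ):ℤ))) * gz e m k)
          = (Qz (e * (Nat.choose (k+1) 2)) * Qz (e * (m+1-((k+1:ℕ):ℤ)))) * z^(k+1) * gz e m k := by ring
        _ = (Qz (e * m) * Qz (e * (Nat.choose k 2))) * z^(k+1) * gz e m k := by rw [hexp]
        _ = (z * Qz (e * m)) * (Qz (e * (Nat.choose k 2)) * z^k * gz e m k) := by ring
    rw [hfirst, hsecond, ← Finset.mul_sum]
    ring

/-- sign `(-1)^j` for `j : ℤ`. -/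
def sg (j : ℤ) : K := if Even j then 1 else -1

/-- `Es s j = j(5j + 2s + 1)/2`, the theta exponents. -/
def Es (s : ℕ) (j : ℤ) : ℤ := j * (5*j + 2*s + 1) / 2

lemma Es_two (s : ℕ) (j : ℤ) : 2 * Es s j = j * (5*j + 2*s + 1) := by
  have hd : (2:ℤ) ∣ j * (5*j + 2*s + 1) := by
    rcases Int.even_or_odd j with ⟨r, hr⟩ | ⟨r, hr⟩
    · exact Dvd.dvd.mul_right ⟨r, by omega⟩ _
    · exact Dvd.dvd.mul_left ⟨5*r + s + 3, by rw [hr]; push_cast; ring⟩ _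
  rw [Es, mul_comm, Int.ediv_mul_cancel hd]

lemma Qz_sum {α : Type} (S : Finset α) (f : α → ℤ) :
    ∏ i ∈ S, Qz (f i) = Qz (∑ i ∈ S, f i) := by
  classical
  induction S using Finset.cons_induction with
  | empty => simp [Qz_zero]
  | cons a s ha ih => rw [Finset.prod_cons, Finset.sum_cons, ih, Qz_mul]

lemma neg_one_pow_mod (a b : ℕ) (h : a % 2 = b % 2) : ((-1 : K))^a = (-1)^b := by
  have key : ∀ a : ℕ, ((-1:K))^a = (-1)^(a % 2) := by
    intro a
    conv_lhs => rw [← Nat.div_add_mod a 2]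
    rw [pow_add, pow_mul]
    norm_num
  rw [key a, key b, h]

lemma neg_one_pow_eq_sg (n k : ℕ) (j : ℤ) (h : j = (k:ℤ) - n) :
    ((-1:K))^k = (-1)^n * sg j := by
  unfold sg
  by_cases hj : Even j
  · rw [if_pos hj, mul_one]
    rw [Int.even_iff] at hj
    exact neg_one_pow_mod k n (by omega)
  · rw [if_neg hj]
    rw [Int.even_iff] at hj
    have hk : k % 2 = (n+1) % 2 := by omega
    rw [neg_one_pow_mod k (n+1) hk, pow_succ]

lemma sum_arith (c : ℤ) (n : ℕ) :
    2 * (∑ i ∈ Finset.range n, (c + 5*(i:ℤ))) = 2*n*c + 5*(n*(n-1)) := by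
  induction n with
  | zero => simp
  | succ n ih =>
    rw [Finset.sum_range_succ, mul_add, ih]
    push_cast
    ring

lemma choose_two_cast (k : ℕ) : 2 * ((Nat.choose k 2 : ℕ) : ℤ) = k * (k - 1) := by
  induction k with
  | zero => simp
  | succ k ih =>
    rw [Nat.choose_succ_succ k 1, Nat.choose_one_right]
    push_cast at *
    linear_combination ih

lemma one_sub_Qz_flip (a : ℤ) : (1 - Qz a : K) = (-Qz a) * (1 - Qz (-a)) := by
  have h := Qz_mul a (-a)
  rw [add_neg_cancel, Qz_zero] at h
  linear_combination -h

/-- the finite Jacobi triple product specialization. -/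
theorem jtpK (s : ℕ) (n : ℕ) :
    ∑ j ∈ Finset.Icc (-(n:ℤ)) (n:ℤ), sg j * Qz (Es s j) * gz 5 (2*n) ((n:ℤ)+j)
      = ∏ i ∈ Finset.range n,
          ((1 - Qz (5*(i+1) - (3+(s:ℤ)))) * (1 - Qz (5*(i+1) - 2 + s))) := by
  have h5 : (0:ℤ) < 5 := by norm_num
  set c : ℤ := 3 + (s:ℤ) - 5*n with hc
  have hg := gauss h5 (-Qz c) (2*n)
  set An : ℤ := ∑ i ∈ Finset.range n, (c + 5*(i:ℤ)) with hAn
  have h2A : 2 * An = 2*n*c + 5*(n*(n-1)) := sum_arith c n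
  -- Step 1 : rewrite the product side of Gauss
  have hprod : ∏ i ∈ Finset.range (2*n), (1 + (-Qz c) * Qz (5 * (i:ℤ)) : K)
      = ((-1)^n * Qz An) * ∏ i ∈ Finset.range n,
          ((1 - Qz (5*(i+1) - (3+(s:ℤ)))) * (1 - Qz (5*(i+1) - 2 + s))) := by
    have hfac : ∀ i : ℕ, (1 + (-Qz c) * Qz (5 * (i:ℤ)) : K) = 1 - Qz (c + 5*i) := by
      intro i
      have h := Qz_mul c (5*(i:ℤ))
      linear_combination -h
    rw [Finset.prod_congr rfl fun i _ => hfac i, two_mul, Finset.prod_range_add]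
    have hsecond : ∀ i : ℕ, (1 - Qz (c + 5*((n + i : ℕ):ℤ)) : K) = 1 - Qz (5*((i:ℤ)+1) - 2 + s) := by
      intro i
      congr 1
      push_cast [hc]
      ring
    rw [Finset.prod_congr rfl fun i _ => hsecond i]
    have hfirst : ∏ i ∈ Finset.range n, (1 - Qz (c + 5*(i:ℤ)) : K)
        = ((-1)^n * Qz An) * ∏ i ∈ Finset.range n, (1 - Qz (5*((i:ℤ)+1) - (3+(s:ℤ)))) := by
      have hflip : ∀ i : ℕ, (1 - Qz (c + 5*(i:ℤ)) : K)
          = (-1) * Qz (c + 5*i) * (1 - Qz (-(c + 5*i))) := by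
        intro i
        rw [one_sub_Qz_flip (c + 5*(i:ℤ))]
        ring
      rw [Finset.prod_congr rfl fun i _ => hflip i]
      rw [Finset.prod_mul_distrib, Finset.prod_mul_distrib, Finset.prod_const,
        Finset.card_range, Qz_sum, ← hAn]
      congr 1
      conv_rhs => rw [← Finset.prod_range_reflect]
      refine Finset.prod_congr rfl fun i hi => ?_
      rw [Finset.mem_range] at hi
      congr 1
      have hcast : ((n - 1 - i : ℕ) : ℤ) = (n:ℤ) - 1 - i := by omega
      rw [hcast, hc]
      ring
    rw [hfirst, Finset.prod_mul_distrib]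
    ring
  -- Step 2 : rewrite the sum side of Gauss
  have hsum : ∑ k ∈ Finset.range (2*n+1), Qz (5 * (Nat.choose k 2)) * (-Qz c)^k * gz 5 (2*n) k
      = ((-1)^n * Qz An) *
        ∑ j ∈ Finset.Icc (-(n:ℤ)) (n:ℤ), sg j * Qz (Es s j) * gz 5 (2*n) ((n:ℤ)+j) := by
    rw [Finset.mul_sum]
    refine Finset.sum_nbij' (fun k => (k:ℤ) - n) (fun j => (j + n).toNat) ?_ ?_ ?_ ?_ ?_
    · intro k hk
      rw [Finset.mem_range] at hk
      rw [Finset.mem_Icc]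
      omega
    · intro j hj
      rw [Finset.mem_Icc] at hj
      rw [Finset.mem_range]
      omega
    · intro k hk
      omega
    · intro j hj
      rw [Finset.mem_Icc] at hj
      omega
    · intro k hk
      rw [Finset.mem_range] at hk
      set j : ℤ := (k:ℤ) - n with hj
      have hk2 : ((n:ℤ) + j) = k := by omega
      rw [hk2]
      have hsgn : ((-Qz c)^k : K) = (-1)^n * sg j * Qz (c * k) := by
        have hbase : (-Qz c : K) = (-1) * Qz c := by ring
        rw [hbase, mul_pow, Qz_pow, neg_one_pow_eq_sg n k j hj]
        try ring
      rw [hsgn]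
      have hexp : Qz (5 * (Nat.choose k 2)) * Qz (c * k) = Qz An * Qz (Es s j) := by
        rw [Qz_mul, Qz_mul]
        congr 1
        have hch := choose_two_cast k
        have hEt := Es_two s j
        have hj' : (k:ℤ) = j + n := by omega
        have hmain : 5*((k:ℤ)*((k:ℤ)-1)) + 2*c*(k:ℤ) = 2*An + 2*(Es s j) := by
          rw [h2A, hEt, hj', hc]
          push_cast
          ring
        have h10 : 2 * (5 * ((Nat.choose k 2 : ℕ) : ℤ) + c * k) = 2 * (An + Es s j) := by
          linear_combination 5 * hch + hmain
        omega
      calc Qz (5 * (Nat.choose k 2)) * ((-1)^n * sg j * Qz (c * k)) * gz 5 (2*n) k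
          = ((-1)^n : K) * sg j * (Qz (5 * (Nat.choose k 2)) * Qz (c * k)) * gz 5 (2*n) k := by
            ring
        _ = ((-1)^n : K) * sg j * (Qz An * Qz (Es s j)) * gz 5 (2*n) k := by rw [hexp]
        _ = (-1)^n * Qz An * (sg j * Qz (Es s j) * gz 5 (2*n) k) := by ring
  rw [hprod, hsum] at hg
  have hne : ((-1:K))^n * Qz An ≠ 0 :=
    mul_ne_zero (pow_ne_zero _ (by norm_num)) (Qz_ne_zero _)
  exact (mul_left_cancel₀ hne hg).symm

/-! ### Schur's identity -/

/-- term of the Schur sum -/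
def trm (s n : ℕ) (j : ℤ) : K := sg j * Qz (Es s j) * gz 1 (n + s) (((n:ℤ) - 5*j)/2)

/-- the Schur alternating sum -/
def SchK (s n : ℕ) : K := ∑ j ∈ Finset.Icc (-(n:ℤ)-1) ((n:ℤ)+1), trm s n j

/-- the Rogers-Ramanujan partial sum -/
def cK (s n : ℕ) : K :=
  ∑ k ∈ Finset.range (n+1), Qz ((k^2 + s*k : ℕ)) * gz 1 (n - k) (k:ℤ)

lemma trm_vanish {s : ℕ} (hs : s ≤ 1) (n : ℕ) {j : ℤ}
    (h : j < -(n:ℤ)-1 ∨ (n:ℤ)+1 < j) : trm s n j = 0 := by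
  rcases h with h | h
  · have : (n:ℤ) + s < ((n:ℤ) - 5*j)/2 := by omega
    rw [trm, gz_of_gt _ _ (by push_cast; omega), mul_zero]
  · have : ((n:ℤ) - 5*j)/2 < 0 := by omega
    rw [trm, gz_of_neg _ _ this, mul_zero]

lemma sg_succ (j : ℤ) : sg (j+1) = -sg j := by
  unfold sg
  rcases Int.even_or_odd j with h | h
  · have h1 : ¬ Even (j+1) := by
      rcases h with ⟨r, hr⟩
      rintro ⟨t, ht⟩
      omega
    rw [if_pos h, if_neg h1]
  · have h1 : Even (j+1) := by
      rcases h with ⟨r, hr⟩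
      exact ⟨r+1, by omega⟩
    have h2 : ¬ Even j := by
      rintro ⟨t, ht⟩
      rcases h with ⟨r, hr⟩
      omega
    rw [if_pos h1, if_neg h2]
    ring

lemma sum_shift (f : ℤ → K) (c : ℤ) (m : ℕ) :
    ∑ i ∈ Finset.range m, f (c + i) = ∑ j ∈ Finset.Icc c (c + m - 1), f j := by
  refine Finset.sum_nbij' (fun i => c + (i:ℤ)) (fun j => (j - c).toNat) ?_ ?_ ?_ ?_ ?_
  · intro x hx
    simp only [Finset.mem_range] at hx
    simp only [Finset.mem_Icc]
    omega
  · intro x hx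
    simp only [Finset.mem_Icc] at hx
    simp only [Finset.mem_range]
    omega
  · intro x hx
    omega
  · intro x hx
    simp only [Finset.mem_Icc] at hx
    omega
  · intro x hx
    dsimp only
    try rfl

lemma sum_pair (f : ℕ → K) (m : ℕ) :
    ∑ i ∈ Finset.range (2*m), f i = ∑ t ∈ Finset.range m, (f (2*t) + f (2*t+1)) := by
  induction m with
  | zero => simp
  | succ m ih =>
    rw [show 2*(m+1) = 2*m+1+1 from by ring, Finset.sum_range_succ, Finset.sum_range_succ,
      Finset.sum_range_succ, ih]
    ring

/-- The key pairwise identity for Schur's induction. -/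
lemma Upair (s n : ℕ) (j : ℤ) (hpar : ((n:ℤ) + j) % 2 = 1) :
    (trm s (n+2) j - trm s (n+1) j) + (trm s (n+2) (j+1) - trm s (n+1) (j+1))
      = Qz ((n:ℤ)+1+s) * (trm s n j + trm s n (j+1)) := by
  obtain ⟨k, hk⟩ : ∃ k : ℤ, (n:ℤ) + 2 - 5*j = 2*k+1 := ⟨((n:ℤ)+2-5*j)/2, by omega⟩
  have one_pos' : (0:ℤ) < 1 := one_pos
  -- index computations
  have i1 : (((n+2:ℕ):ℤ) - 5*j)/2 = k := by push_cast; omega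
  have i2 : (((n+1:ℕ):ℤ) - 5*j)/2 = k := by push_cast; omega
  have i3 : (((n+2:ℕ):ℤ) - 5*(j+1))/2 = k-2 := by push_cast; omega
  have i4 : (((n+1:ℕ):ℤ) - 5*(j+1))/2 = k-3 := by push_cast; omega
  have i5 : ((n:ℤ) - 5*j)/2 = k-1 := by omega
  have i6 : ((n:ℤ) - 5*(j+1))/2 = k-3 := by omega
  -- top-index normalizations
  have t1 : (n+2) + s = (n+s+1)+1 := by ring
  have t2 : (n+1) + s = n+s+1 := by ring
  -- Pascal expansions
  have hp1 : gz 1 ((n+s+1)+1) k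
      = gz 1 (n+s+1) k + Qz (((n+s+1:ℕ):ℤ)+1-k) * gz 1 (n+s+1) (k-1) := by
    have h := gz_pascal1 one_pos' (n+s+1) k
    rwa [one_mul] at h
  have hp2 : gz 1 ((n+s+1)+1) (k-2)
      = Qz (k-2) * gz 1 (n+s+1) (k-2) + gz 1 (n+s+1) (k-3) := by
    have h := gz_pascal2 one_pos' (n+s+1) (k-2)
    rw [one_mul, show k-2-1 = k-3 from by ring] at h
    exact h
  have hd : gz 1 ((n+s)+1) (k-1) - gz 1 ((n+s)+1) (k-2)
      = Qz (k-1) * gz 1 (n+s) (k-1) - Qz (((n+s:ℕ):ℤ)+1-(k-2)) * gz 1 (n+s) (k-3) := by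
    have h := gz_diff one_pos' (n+s) (k-2)
    rw [one_mul, one_mul, show k-2+1 = k-1 from by ring, show k-2-1 = k-3 from by ring] at h
    exact h
  have hd' : gz 1 (n+s+1) (k-1) - gz 1 (n+s+1) (k-2)
      = Qz (k-1) * gz 1 (n+s) (k-1) - Qz (((n+s:ℕ):ℤ)+1-(k-2)) * gz 1 (n+s) (k-3) := hd
  -- sign fact
  have hsg : sg (j+1) = -sg j := sg_succ j
  -- exponent bookkeeping
  have q1 : Qz (Es s j) * Qz (((n+s+1:ℕ):ℤ)+1-k) = Qz (Es s j + ((n:ℤ)+2+s-k)) := by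
    rw [Qz_mul]; congr 1; push_cast; ring
  have q2 : Qz (Es s (j+1)) * Qz (k-2) = Qz (Es s j + ((n:ℤ)+2+s-k)) := by
    rw [Qz_mul]; congr 1
    have h1 := Es_two s j
    have h2 := Es_two s (j+1)
    have expand : (j+1) * (5*(j+1) + 2*s + 1) = j*(5*j+2*s+1) + 10*j + 2*s + 6 := by ring
    omega
  have q3 : Qz (Es s j + ((n:ℤ)+2+s-k)) * Qz (k-1) = Qz ((n:ℤ)+1+s) * Qz (Es s j) := by
    rw [Qz_mul, Qz_mul]; congr 1; omega
  have q4 : Qz (Es s j + ((n:ℤ)+2+s-k)) * Qz (((n+s:ℕ):ℤ)+1-(k-2))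
      = Qz ((n:ℤ)+1+s) * Qz (Es s (j+1)) := by
    rw [Qz_mul, Qz_mul]; congr 1
    have h1 := Es_two s j
    have h2 := Es_two s (j+1)
    have expand : (j+1) * (5*(j+1) + 2*s + 1) = j*(5*j+2*s+1) + 10*j + 2*s + 6 := by ring
    push_cast
    omega
  -- expand all six terms
  unfold trm
  rw [i1, i2, i3, i4, i5, i6, t1, t2, hsg]
  linear_combination (sg j * Qz (Es s j)) * hp1 - (sg j * Qz (Es s (j+1))) * hp2
    + (sg j * Qz (Es s j + ((n:ℤ)+2+s-k))) * hd'
    + (sg j * gz 1 (n+s+1) (k-1)) * q1 - (sg j * gz 1 (n+s+1) (k-2)) * q2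
    + (sg j * gz 1 (n+s) (k-1)) * q3 - (sg j * gz 1 (n+s) (k-3)) * q4

lemma SchK_rec {s : ℕ} (hs : s ≤ 1) (n : ℕ) :
    SchK s (n+2) = SchK s (n+1) + Qz ((n:ℤ)+1+(s:ℤ)) * SchK s n := by
  set a : ℤ := -(n:ℤ)-3 with ha
  have hconv : ∀ l : ℕ, n ≤ l → l ≤ n+2 →
      SchK s l = ∑ i ∈ Finset.range (2*(n+4)), trm s l (a+i) := by
    intro l h1 h2
    rw [sum_shift (trm s l) a (2*(n+4))]
    have hend : a + ((2*(n+4):ℕ):ℤ) - 1 = (n:ℤ)+4 := by push_cast [ha]; ring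
    rw [hend]
    unfold SchK
    refine Finset.sum_subset ?_ ?_
    · intro x hx
      simp only [Finset.mem_Icc] at *
      omega
    · intro x hx hnx
      simp only [Finset.mem_Icc] at hx hnx
      refine trm_vanish hs l ?_
      omega
  rw [hconv (n+2) (by omega) (by omega), hconv (n+1) (by omega) (by omega),
    hconv n (by omega) (by omega)]
  rw [sum_pair (fun i => trm s (n+2) (a+i)) (n+4), sum_pair (fun i => trm s (n+1) (a+i)) (n+4),
    sum_pair (fun i => trm s n (a+i)) (n+4), Finset.mul_sum, ← Finset.sum_add_distrib]
  refine Finset.sum_congr rfl fun t ht => ?_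
  have hpar : ((n:ℤ) + (a + 2*(t:ℤ))) % 2 = 1 := by omega
  have hp := Upair s n (a + 2*(t:ℤ)) hpar
  have c1 : a + ((2*t:ℕ):ℤ) = a + 2*(t:ℤ) := by push_cast; ring
  have c2 : a + ((2*t+1:ℕ):ℤ) = (a + 2*(t:ℤ)) + 1 := by push_cast; ring
  rw [c1, c2]
  linear_combination hp

lemma SchK_zero {s : ℕ} (hs : s ≤ 1) : SchK s 0 = 1 := by
  have hset : Finset.Icc (-(0:ℤ)-1) ((0:ℤ)+1) = {-1, 0, 1} := by decide
  unfold SchK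
  simp only [Nat.cast_zero]
  rw [hset]
  have v1 : trm s 0 (-1) = 0 := by
    unfold trm
    have hz : gz 1 (0+s) (2:ℤ) = 0 := gz_of_gt 1 (0+s) (by push_cast; omega)
    rw [show ((0:ℕ):ℤ) - 5*(-1) = 5 from by norm_num, show (5:ℤ)/2 = 2 from by decide,
      hz, mul_zero]
  have v2 : trm s 0 0 = 1 := by
    unfold trm
    rw [show ((0:ℕ):ℤ) - 5*0 = 0 from by norm_num, show (0:ℤ)/2 = 0 from by norm_num,
      gz_zero one_pos]
    have : Es s 0 = 0 := by unfold Es; simp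
    rw [this, Qz_zero]
    simp [sg]
  have v3 : trm s 0 1 = 0 := by
    unfold trm
    rw [show ((0:ℕ):ℤ) - 5*1 = -5 from by norm_num, show (-5:ℤ)/2 = -3 from by decide,
      gz_of_neg _ _ (by norm_num), mul_zero]
  rw [show ({-1, 0, 1} : Finset ℤ) = insert (-1) (insert 0 {1}) from rfl]
  rw [Finset.sum_insert (by decide), Finset.sum_insert (by decide), Finset.sum_singleton]
  rw [v1, v2, v3]
  ring

lemma SchK_one {s : ℕ} (hs : s ≤ 1) : SchK s 1 = 1 := by
  have hset : Finset.Icc (-(1:ℤ)-1) ((1:ℤ)+1) = {-2, -1, 0, 1, 2} := by decide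
  unfold SchK
  simp only [Nat.cast_one]
  rw [hset]
  have v1 : trm s 1 (-2) = 0 := by
    unfold trm
    have hz : gz 1 (1+s) (5:ℤ) = 0 := gz_of_gt 1 (1+s) (by push_cast; omega)
    rw [show ((1:ℕ):ℤ) - 5*(-2) = 11 from by norm_num, show (11:ℤ)/2 = 5 from by decide,
      hz, mul_zero]
  have v2 : trm s 1 (-1) = 0 := by
    unfold trm
    have hz : gz 1 (1+s) (3:ℤ) = 0 := gz_of_gt 1 (1+s) (by push_cast; omega)
    rw [show ((1:ℕ):ℤ) - 5*(-1) = 6 from by norm_num, show (6:ℤ)/2 = 3 from by decide,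
      hz, mul_zero]
  have v3 : trm s 1 0 = 1 := by
    unfold trm
    rw [show ((1:ℕ):ℤ) - 5*0 = 1 from by norm_num, show (1:ℤ)/2 = 0 from by decide,
      gz_zero one_pos]
    have : Es s 0 = 0 := by unfold Es; simp
    rw [this, Qz_zero]
    simp [sg]
  have v4 : trm s 1 1 = 0 := by
    unfold trm
    rw [show ((1:ℕ):ℤ) - 5*1 = -4 from by norm_num, show (-4:ℤ)/2 = -2 from by decide,
      gz_of_neg _ _ (by norm_num), mul_zero]
  have v5 : trm s 1 2 = 0 := by
    unfold trm
    rw [show ((1:ℕ):ℤ) - 5*2 = -9 from by norm_num, show (-9:ℤ)/2 = -5 from by decide,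
      gz_of_neg _ _ (by norm_num), mul_zero]
  rw [show ({-2, -1, 0, 1, 2} : Finset ℤ)
      = insert (-2) (insert (-1) (insert 0 (insert 1 {2}))) from rfl]
  rw [Finset.sum_insert (by decide), Finset.sum_insert (by decide),
    Finset.sum_insert (by decide), Finset.sum_insert (by decide), Finset.sum_singleton]
  rw [v1, v2, v3, v4, v5]
  ring

lemma cK_zero (s : ℕ) : cK s 0 = 1 := by
  unfold cK
  rw [Finset.sum_range_one]
  norm_num [gz_zero one_pos, Qz_zero]

lemma cK_one (s : ℕ) : cK s 1 = 1 := by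
  unfold cK
  rw [Finset.sum_range_succ, Finset.sum_range_one]
  have h1 : gz 1 (1-1) ((1:ℕ):ℤ) = 0 := gz_of_gt _ _ (by norm_num)
  rw [h1, mul_zero, add_zero]
  norm_num [gz_zero one_pos, Qz_zero]

lemma cK_rec (s n : ℕ) :
    cK s (n+2) = cK s (n+1) + Qz ((n:ℤ)+1+(s:ℤ)) * cK s n := by
  unfold cK
  rw [Finset.sum_range_succ (n := n+2)]
  have hz : gz 1 ((n+2)-(n+2)) ((n+2:ℕ):ℤ) = 0 := by
    rw [show (n+2) - (n+2) = 0 from by omega]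
    exact gz_of_gt 1 0 (by push_cast; omega)
  rw [hz, mul_zero, add_zero]
  have expand : ∀ k ∈ Finset.range (n+2),
      (Qz ((k^2 + s*k : ℕ)) * gz 1 (n+2-k) (k:ℤ) : K)
        = Qz ((k^2 + s*k : ℕ)) * gz 1 (n+1-k) (k:ℤ)
          + Qz ((k^2 + s*k : ℕ)) * (Qz (1*(((n+1-k:ℕ):ℤ)+1-(k:ℤ))) * gz 1 (n+1-k) ((k:ℤ)-1)) := by
    intro k hk
    rw [Finset.mem_range] at hk
    have h1 : n+2-k = (n+1-k)+1 := by omega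
    rw [h1, gz_pascal1 one_pos (n+1-k) (k:ℤ)]
    ring
  rw [Finset.sum_congr rfl expand, Finset.sum_add_distrib]
  congr 1
  rw [Finset.sum_range_succ' _ (n+1)]
  have h0 : (Qz ((0^2 + s*0 : ℕ)) * (Qz (1*(((n+1-0:ℕ):ℤ)+1-((0:ℕ):ℤ))) * gz 1 (n+1-0) (((0:ℕ):ℤ)-1)) : K) = 0 := by
    rw [gz_of_neg _ _ (by norm_num)]
    ring
  rw [h0, add_zero, Finset.mul_sum]
  refine Finset.sum_congr rfl fun k hk => ?_
  rw [Finset.mem_range] at hk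
  have hidx : ((k+1:ℕ):ℤ) - 1 = (k:ℤ) := by push_cast; ring
  have hcast : ((n+1-(k+1):ℕ):ℤ) = (n:ℤ) - k := by omega
  have hq : (Qz (((k+1)^2 + s*(k+1) : ℕ)) * Qz (1*(((n+1-(k+1):ℕ):ℤ)+1-((k+1:ℕ):ℤ))) : K)
      = Qz ((n:ℤ)+1+s) * Qz ((k^2 + s*k : ℕ)) := by
    rw [Qz_mul, Qz_mul]
    congr 1
    rw [hcast]
    push_cast
    ring
  calc Qz (((k+1)^2 + s*(k+1) : ℕ)) * (Qz (1*(((n+1-(k+1):ℕ):ℤ)+1-((k+1:ℕ):ℤ))) * gz 1 (n+1-(k+1)) (((k+1:ℕ):ℤ)-1))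
      = (Qz (((k+1)^2 + s*(k+1) : ℕ)) * Qz (1*(((n+1-(k+1):ℕ):ℤ)+1-((k+1:ℕ):ℤ)))) * gz 1 (n+1-(k+1)) (((k+1:ℕ):ℤ)-1) := by ring
    _ = (Qz ((n:ℤ)+1+s) * Qz ((k^2 + s*k : ℕ))) * gz 1 (n+1-(k+1)) (((k+1:ℕ):ℤ)-1) := by rw [hq]
    _ = Qz ((n:ℤ)+1+s) * (Qz ((k^2 + s*k : ℕ)) * gz 1 (n+1-(k+1)) ((k:ℕ):ℤ)) := by rw [hidx]; ring
    _ = Qz ((n:ℤ)+1+s) * (Qz ((k^2 + s*k : ℕ)) * gz 1 (n-k) ((k:ℕ):ℤ)) := by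
        rw [show n+1-(k+1) = n-k from by omega]

theorem cK_eq_SchK {s : ℕ} (hs : s ≤ 1) (n : ℕ) : cK s n = SchK s n := by
  have H : ∀ m : ℕ, cK s m = SchK s m ∧ cK s (m+1) = SchK s (m+1) := by
    intro m
    induction m with
    | zero => exact ⟨by rw [cK_zero, SchK_zero hs], by rw [cK_one, SchK_one hs]⟩
    | succ m ih =>
      refine ⟨ih.2, ?_⟩
      rw [cK_rec s m, SchK_rec hs m, ih.1, ih.2]
  exact (H n).1

/-! ### PowerSeries setup -/

noncomputable instance : TopologicalSpace (PowerSeries ℚ) :=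
  TopologicalSpace.induced (fun f (n : ℕ) => (PowerSeries.coeff (R := ℚ) n) f) inferInstance

/-- the formal variable `q` -/
noncomputable def q : PowerSeries ℚ := PowerSeries.X

/-- the finite Pochhammer symbol `(q;q)_n` -/
noncomputable def poch (n : ℕ) : PowerSeries ℚ :=
  ∏ i ∈ Finset.range n, (1 - q ^ (i + 1))

abbrev PS : Type := PowerSeries ℚ

instance : T2Space PS :=
  Topology.IsEmbedding.t2Space (f := fun f (n : ℕ) => (PowerSeries.coeff (R := ℚ) n) f)
    ⟨⟨rfl⟩, fun a b hab => PowerSeries.ext fun n => congrFun hab n⟩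

def phi : PS →+* K := HahnSeries.ofPowerSeries ℤ ℚ

lemma phi_inj : Function.Injective phi := HahnSeries.ofPowerSeries_injective

lemma phi_q_pow (m : ℕ) : phi (q ^ m) = Qz (m : ℤ) := by
  rw [map_pow]
  have h1 : phi q = Qz 1 := HahnSeries.ofPowerSeries_X
  rw [h1, Qz_pow]
  congr 1
  ring

def pochP (e n : ℕ) : PS := ∏ i ∈ Finset.range n, (1 - q ^ (e*(i+1)))

lemma poch_eq_pochP (n : ℕ) : poch n = pochP 1 n := by
  unfold poch pochP
  refine Finset.prod_congr rfl fun i _ => ?_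
  rw [one_mul]

lemma phi_pochP (e n : ℕ) : phi (pochP e n) = pochK (e:ℤ) n := by
  unfold pochP pochK
  rw [map_prod]
  refine Finset.prod_congr rfl fun i _ => ?_
  rw [map_sub, map_one, phi_q_pow]
  norm_cast

lemma constCoeff_pochP {e : ℕ} (he : 1 ≤ e) (n : ℕ) :
    PowerSeries.constantCoeff (R := ℚ) (pochP e n) = 1 := by
  unfold pochP
  rw [map_prod]
  refine Finset.prod_eq_one fun i _ => ?_
  rw [map_sub, map_one, map_pow]
  have : PowerSeries.constantCoeff (R := ℚ) q = 0 := PowerSeries.constantCoeff_X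
  rw [this, zero_pow (by positivity), sub_zero]

lemma phi_inv {f : PS} (h : PowerSeries.constantCoeff (R := ℚ) f ≠ 0) :
    phi (f⁻¹) = (phi f)⁻¹ := by
  have h1 : phi f * phi (f⁻¹) = 1 := by
    rw [← map_mul, PowerSeries.mul_inv_cancel _ h, map_one]
  exact eq_inv_of_mul_eq_one_left (by rw [mul_comm] at h1; exact h1)

def gbP (e n : ℕ) (k : ℤ) : PS :=
  if 0 ≤ k ∧ k ≤ n then pochP e n * (pochP e k.toNat)⁻¹ * (pochP e (n - k.toNat))⁻¹ else 0

lemma phi_gbP {e : ℕ} (he : 1 ≤ e) (n : ℕ) (k : ℤ) : phi (gbP e n k) = gz (e:ℤ) n k := by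
  unfold gbP gz
  by_cases h : 0 ≤ k ∧ k ≤ (n:ℤ)
  · rw [if_pos h, if_pos h, map_mul, map_mul, phi_pochP,
      phi_inv (by rw [constCoeff_pochP he]; norm_num),
      phi_inv (by rw [constCoeff_pochP he]; norm_num), phi_pochP, phi_pochP]
    have he' : (0:ℤ) < (e:ℤ) := by exact_mod_cast he
    field_simp
  · rw [if_neg h, if_neg h, map_zero]

/-- the s-indexed sign in `PS`. -/
def sgP (j : ℤ) : PS := if Even j then 1 else -1

lemma phi_sgP (j : ℤ) : phi (sgP j) = sg j := by
  unfold sgP sg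
  by_cases h : Even j
  · rw [if_pos h, if_pos h, map_one]
  · rw [if_neg h, if_neg h, map_neg, map_one]

lemma Es_nonneg {s : ℕ} (hs : s ≤ 1) (j : ℤ) : 0 ≤ Es s j := by
  have h := Es_two s j
  rcases le_or_gt 0 j with hj | hj
  · nlinarith [mul_nonneg hj (by omega : (0:ℤ) ≤ 5*j + 2*s + 1)]
  · nlinarith [mul_pos_of_neg_of_neg hj (by omega : 5*j + 2*s + 1 < 0)]

lemma phi_Es {s : ℕ} (hs : s ≤ 1) (j : ℤ) : phi (q ^ (Es s j).toNat) = Qz (Es s j) := by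
  rw [phi_q_pow, Int.toNat_of_nonneg (Es_nonneg hs j)]

/-- The PowerSeries-level Schur identity. -/
theorem cP_eq_SchP {s : ℕ} (hs : s ≤ 1) (n : ℕ) :
    ∑ k ∈ Finset.range (n+1), q^(k^2 + s*k) * gbP 1 (n-k) (k:ℤ)
      = ∑ j ∈ Finset.Icc (-(n:ℤ)-1) ((n:ℤ)+1),
          sgP j * q^((Es s j).toNat) * gbP 1 (n+s) (((n:ℤ) - 5*j)/2) := by
  apply phi_inj
  rw [map_sum, map_sum]
  have h1 : ∀ k ∈ Finset.range (n+1), phi (q^(k^2 + s*k) * gbP 1 (n-k) (k:ℤ))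
      = Qz ((k^2 + s*k : ℕ)) * gz 1 (n-k) (k:ℤ) := by
    intro k _
    rw [map_mul, phi_q_pow, phi_gbP le_rfl]
    norm_num
  have h2 : ∀ j ∈ Finset.Icc (-(n:ℤ)-1) ((n:ℤ)+1),
      phi (sgP j * q^((Es s j).toNat) * gbP 1 (n+s) (((n:ℤ) - 5*j)/2))
        = trm s n j := by
    intro j _
    rw [map_mul, map_mul, phi_sgP, phi_Es hs, phi_gbP le_rfl]
    rfl
  rw [Finset.sum_congr rfl h1, Finset.sum_congr rfl h2]
  exact cK_eq_SchK hs n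

/-- The PowerSeries-level finite Jacobi triple product. -/
theorem jtpP {s : ℕ} (hs : s ≤ 1) (n : ℕ) :
    ∑ j ∈ Finset.Icc (-(n:ℤ)) (n:ℤ), sgP j * q^((Es s j).toNat) * gbP 5 (2*n) ((n:ℤ)+j)
      = ∏ i ∈ Finset.range n, ((1 - q^(5*(i+1) - (3+s))) * (1 - q^(5*(i+1) - 2 + s))) := by
  apply phi_inj
  rw [map_sum, map_prod]
  have h1 : ∀ j ∈ Finset.Icc (-(n:ℤ)) (n:ℤ),
      phi (sgP j * q^((Es s j).toNat) * gbP 5 (2*n) ((n:ℤ)+j))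
        = sg j * Qz (Es s j) * gz 5 (2*n) ((n:ℤ)+j) := by
    intro j _
    rw [map_mul, map_mul, phi_sgP, phi_Es hs, phi_gbP (by norm_num)]
    norm_num
  have h2 : ∀ i ∈ Finset.range n,
      phi ((1 - q^(5*(i+1) - (3+s))) * (1 - q^(5*(i+1) - 2 + s)))
        = (1 - Qz (5*((i:ℤ)+1) - (3+(s:ℤ)))) * (1 - Qz (5*((i:ℤ)+1) - 2 + (s:ℤ))) := by
    intro i _
    rw [map_mul, map_sub, map_sub, map_one, phi_q_pow, phi_q_pow]
    congr 3
    · omega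
    · omega
  rw [Finset.sum_congr rfl h1, Finset.prod_congr rfl h2]
  exact jtpK s n

/-! ### coefficientwise approximation -/

/-- `f` and `g` agree in coefficients `0,…,N`. -/
def Deq (N : ℕ) (f g : PS) : Prop := PowerSeries.X ^ (N+1) ∣ (f - g)

lemma Deq.refl (N : ℕ) (f : PS) : Deq N f f := by simp [Deq]

lemma Deq.symm {N : ℕ} {f g : PS} (h : Deq N f g) : Deq N g f := by
  rw [Deq, ← neg_sub f g]
  exact dvd_neg.2 h

lemma Deq.trans {N : ℕ} {f g h : PS} (h1 : Deq N f g) (h2 : Deq N g h) : Deq N f h := by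
  have := dvd_add h1 h2
  simpa [Deq] using this

lemma Deq.coeff {N : ℕ} {f g : PS} (h : Deq N f g) {k : ℕ} (hk : k ≤ N) :
    PowerSeries.coeff (R := ℚ) k f = PowerSeries.coeff (R := ℚ) k g := by
  rw [Deq, PowerSeries.X_pow_dvd_iff] at h
  have := h k (by omega)
  rw [map_sub] at this
  linarith

lemma Deq_of_coeff {N : ℕ} {f g : PS} (h : ∀ k ≤ N, PowerSeries.coeff (R := ℚ) k f = PowerSeries.coeff (R := ℚ) k g) :
    Deq N f g := by
  rw [Deq, PowerSeries.X_pow_dvd_iff]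
  intro m hm
  rw [map_sub, h m (by omega), sub_self]

lemma Deq.mul {N : ℕ} {f g u v : PS} (h1 : Deq N f g) (h2 : Deq N u v) :
    Deq N (f * u) (g * v) := by
  have key : f * u - g * v = f * (u - v) + (f - g) * v := by ring
  rw [Deq, key]
  exact dvd_add (h2.mul_left f) (h1.mul_right v)

lemma Deq.add {N : ℕ} {f g u v : PS} (h1 : Deq N f g) (h2 : Deq N u v) :
    Deq N (f + u) (g + v) := by
  have key : f + u - (g + v) = (f - g) + (u - v) := by ring
  rw [Deq, key]
  exact dvd_add h1 h2

lemma Deq.inv {N : ℕ} {f g : PS} (hf : PowerSeries.constantCoeff (R := ℚ) f ≠ 0)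
    (hg : PowerSeries.constantCoeff (R := ℚ) g ≠ 0) (h : Deq N f g) : Deq N f⁻¹ g⁻¹ := by
  have hf1 : f * f⁻¹ = 1 := PowerSeries.mul_inv_cancel _ hf
  have hg1 : g * g⁻¹ = 1 := PowerSeries.mul_inv_cancel _ hg
  have key : f⁻¹ - g⁻¹ = f⁻¹ * g⁻¹ * (g - f) := by
    linear_combination (g⁻¹) * hf1 - (f⁻¹) * hg1
  rw [Deq, key]
  exact (h.symm).mul_left _

lemma Deq.sum {N : ℕ} {α : Type} {S : Finset α} {f g : α → PS}
    (h : ∀ i ∈ S, Deq N (f i) (g i)) : Deq N (∑ i ∈ S, f i) (∑ i ∈ S, g i) := by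
  rw [Deq, ← Finset.sum_sub_distrib]
  exact Finset.dvd_sum fun i hi => h i hi

lemma prod_sub_one_dvd {N : ℕ} {A : Finset ℕ} {u : ℕ → PS}
    (h : ∀ m ∈ A, PowerSeries.X ^ (N+1) ∣ (u m - 1)) :
    PowerSeries.X ^ (N+1) ∣ (∏ m ∈ A, u m - 1) := by
  classical
  induction A using Finset.cons_induction with
  | empty => simp
  | cons a A ha ih =>
    rw [Finset.prod_cons]
    have key : u a * ∏ m ∈ A, u m - 1 = u a * (∏ m ∈ A, u m - 1) + (u a - 1) := by ring
    rw [key]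
    exact dvd_add ((ih fun m hm => h m (Finset.mem_cons_of_mem hm)).mul_left _)
      (h a (Finset.mem_cons_self a A))

lemma prod_deq_subset {N : ℕ} {u : ℕ → PS} {S T : Finset ℕ} (hTS : T ⊆ S)
    (h : ∀ m ∈ S, m ∉ T → PowerSeries.X ^ (N+1) ∣ (u m - 1)) :
    Deq N (∏ m ∈ S, u m) (∏ m ∈ T, u m) := by
  classical
  rw [Deq, ← Finset.prod_sdiff hTS]
  have key : (∏ m ∈ S \ T, u m) * (∏ m ∈ T, u m) - ∏ m ∈ T, u m
      = (∏ m ∈ S \ T, u m - 1) * ∏ m ∈ T, u m := by ring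
  rw [key]
  refine Dvd.dvd.mul_right ?_ _
  exact prod_sub_one_dvd fun m hm => by
    rw [Finset.mem_sdiff] at hm
    exact h m hm.1 hm.2

/-! ### topology -/

lemma tendsto_of_forall_deq {ι : Type} {l : Filter ι} {F : ι → PS} {g : PS}
    (h : ∀ N, ∀ᶠ x in l, Deq N (F x) g) : Filter.Tendsto F l (nhds g) := by
  have hind : Topology.IsInducing (fun f (n : ℕ) => (PowerSeries.coeff (R := ℚ) n) f) := ⟨rfl⟩
  rw [hind.tendsto_nhds_iff, tendsto_pi_nhds]
  intro n
  refine Filter.Tendsto.congr' ?_ (tendsto_const_nhds (x := PowerSeries.coeff (R := ℚ) n g))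
  exact (h n).mono fun x hx => (hx.coeff le_rfl).symm

/-- limit of the partial products of `u`. -/
noncomputable def Lim (u : ℕ → PS) : PS :=
  PowerSeries.mk fun N => PowerSeries.coeff (R := ℚ) N (∏ i ∈ Finset.range (N+1), u i)

lemma Lim_deq {u : ℕ → PS} (hu : ∀ m, PowerSeries.X ^ (m+1) ∣ (u m - 1)) (N : ℕ) {m : ℕ}
    (hm : N+1 ≤ m) : Deq N (∏ i ∈ Finset.range m, u i) (Lim u) := by
  refine Deq_of_coeff fun k hk => ?_
  have h1 : Deq k (∏ i ∈ Finset.range m, u i) (∏ i ∈ Finset.range (k+1), u i) := by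
    refine prod_deq_subset (by intro x hx; simp only [Finset.mem_range] at *; omega) ?_
    intro i hi hni
    simp only [Finset.mem_range] at hi hni
    exact dvd_trans (pow_dvd_pow _ (by omega)) (hu i)
  rw [h1.coeff le_rfl, Lim, PowerSeries.coeff_mk]

lemma hasProd_of {u : ℕ → PS} (hu : ∀ m, PowerSeries.X ^ (m+1) ∣ (u m - 1)) :
    HasProd u (Lim u) := by
  rw [HasProd]
  apply tendsto_of_forall_deq
  intro N
  rw [SummationFilter.unconditional_filter, Filter.eventually_atTop]
  refine ⟨Finset.range (N+1), fun S hS => ?_⟩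
  have hsub : Finset.range (N+1) ⊆ S := Finset.le_iff_subset.1 hS
  have h1 : Deq N (∏ m ∈ S, u m) (∏ m ∈ Finset.range (N+1), u m) := by
    refine prod_deq_subset hsub ?_
    intro m hm hnm
    simp only [Finset.mem_range] at hnm
    exact dvd_trans (pow_dvd_pow _ (by omega)) (hu m)
  exact h1.trans (Lim_deq hu N le_rfl)

/-- limit of the partial sums of `f`. -/
noncomputable def SumLim (f : ℕ → PS) : PS :=
  PowerSeries.mk fun N => PowerSeries.coeff (R := ℚ) N (∑ i ∈ Finset.range (N+1), f i)

lemma sum_deq_subset {N : ℕ} {α : Type} [DecidableEq α] {f : α → PS} {S T : Finset α} (hTS : T ⊆ S)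
    (h : ∀ m ∈ S, m ∉ T → PowerSeries.X ^ (N+1) ∣ f m) :
    Deq N (∑ m ∈ S, f m) (∑ m ∈ T, f m) := by
  classical
  rw [Deq, ← Finset.sum_sdiff hTS, add_sub_cancel_right]
  exact Finset.dvd_sum fun m hm => by
    rw [Finset.mem_sdiff] at hm
    exact h m hm.1 hm.2

lemma SumLim_deq {f : ℕ → PS} (hf : ∀ m, PowerSeries.X ^ m ∣ f m) (N : ℕ) {m : ℕ}
    (hm : N+1 ≤ m) : Deq N (∑ i ∈ Finset.range m, f i) (SumLim f) := by
  refine Deq_of_coeff fun k hk => ?_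
  have h1 : Deq k (∑ i ∈ Finset.range m, f i) (∑ i ∈ Finset.range (k+1), f i) := by
    refine sum_deq_subset (by intro x hx; simp only [Finset.mem_range] at *; omega) ?_
    intro i hi hni
    simp only [Finset.mem_range] at hi hni
    exact dvd_trans (pow_dvd_pow _ (by omega)) (hf i)
  rw [h1.coeff le_rfl, SumLim, PowerSeries.coeff_mk]

lemma hasSum_of {f : ℕ → PS} (hf : ∀ m, PowerSeries.X ^ m ∣ f m) :
    HasSum f (SumLim f) := by
  rw [HasSum]
  apply tendsto_of_forall_deq
  intro N
  rw [SummationFilter.unconditional_filter, Filter.eventually_atTop]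
  refine ⟨Finset.range (N+1), fun S hS => ?_⟩
  have hsub : Finset.range (N+1) ⊆ S := Finset.le_iff_subset.1 hS
  have h1 : Deq N (∑ m ∈ S, f m) (∑ m ∈ Finset.range (N+1), f m) := by
    refine sum_deq_subset hsub ?_
    intro m hm hnm
    simp only [Finset.mem_range] at hnm
    exact dvd_trans (pow_dvd_pow _ (by omega)) (hf m)
  exact h1.trans (SumLim_deq hf N le_rfl)

lemma eq_of_forall_deq {f g : PS} (h : ∀ N, Deq N f g) : f = g :=
  PowerSeries.ext fun n => (h n).coeff le_rfl

/-! ### the infinite products -/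

/-- factors of `(q^e;q^e)_∞`. -/
noncomputable def uP (e : ℕ) : ℕ → PS := fun m => 1 - q ^ (e*(m+1))

lemma huP {e : ℕ} (he : 1 ≤ e) (m : ℕ) : PowerSeries.X ^ (m+1) ∣ (uP e m - 1) := by
  unfold uP
  rw [sub_sub_cancel_left, dvd_neg, show (q:PS) = PowerSeries.X from rfl]
  exact pow_dvd_pow _ (by nlinarith)

lemma pochP_eq_prod (e m : ℕ) : pochP e m = ∏ i ∈ Finset.range m, uP e i := rfl

/-- `(q^e;q^e)_∞`. -/
noncomputable def Pn (e : ℕ) : PS := Lim (uP e)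

lemma pochP_deq {e : ℕ} (he : 1 ≤ e) (N : ℕ) {m : ℕ} (hm : N+1 ≤ m) :
    Deq N (pochP e m) (Pn e) := by
  rw [pochP_eq_prod]
  exact Lim_deq (huP he) N hm

lemma constCoeff_Lim (u : ℕ → PS) :
    PowerSeries.constantCoeff (R := ℚ) (Lim u) = PowerSeries.constantCoeff (R := ℚ) (u 0) := by
  rw [← PowerSeries.coeff_zero_eq_constantCoeff, Lim, PowerSeries.coeff_mk,
    Finset.range_one, Finset.prod_singleton, PowerSeries.coeff_zero_eq_constantCoeff]

lemma constCoeff_uP {e : ℕ} (he : 1 ≤ e) (m : ℕ) :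
    PowerSeries.constantCoeff (R := ℚ) (uP e m) = 1 := by
  unfold uP
  rw [show (q:PS) = PowerSeries.X from rfl, map_sub, map_one, map_pow,
    PowerSeries.constantCoeff_X, zero_pow (by positivity), sub_zero]

lemma constCoeff_Pn {e : ℕ} (he : 1 ≤ e) : PowerSeries.constantCoeff (R := ℚ) (Pn e) = 1 := by
  rw [Pn, constCoeff_Lim, constCoeff_uP he]

lemma gbP_deq_inv_poch {e : ℕ} (he : 1 ≤ e) (N n : ℕ) (k : ℤ)
    (hk0 : 0 ≤ k) (hbig : k.toNat + (N+1) ≤ n) :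
    Deq N (gbP e n k) ((pochP e k.toNat)⁻¹) := by
  have hkn : k ≤ (n:ℤ) := by omega
  rw [gbP, if_pos ⟨hk0, hkn⟩]
  have c1 : Deq N (pochP e n) (Pn e) := pochP_deq he N (by omega)
  have c2 : Deq N ((pochP e (n - k.toNat))⁻¹) ((Pn e)⁻¹) :=
    Deq.inv (by rw [constCoeff_pochP he]; norm_num) (by rw [constCoeff_Pn he]; norm_num)
      (pochP_deq he N (by omega))
  have c3 := (c1.mul (Deq.refl N ((pochP e k.toNat)⁻¹))).mul c2
  have heq : Pn e * (pochP e k.toNat)⁻¹ * (Pn e)⁻¹ = (pochP e k.toNat)⁻¹ := by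
    have h1 : Pn e * (Pn e)⁻¹ = 1 :=
      PowerSeries.mul_inv_cancel _ (by rw [constCoeff_Pn he]; norm_num)
    calc Pn e * (pochP e k.toNat)⁻¹ * (Pn e)⁻¹
        = (Pn e * (Pn e)⁻¹) * (pochP e k.toNat)⁻¹ := by ring
      _ = (pochP e k.toNat)⁻¹ := by rw [h1, one_mul]
  rwa [heq] at c3

lemma gbP_deq_Pinv {e : ℕ} (he : 1 ≤ e) (N n : ℕ) (k : ℤ)
    (hk0 : 0 ≤ k) (h1 : N+1 ≤ k.toNat) (h2 : k.toNat + (N+1) ≤ n) :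
    Deq N (gbP e n k) ((Pn e)⁻¹) := by
  have c0 := gbP_deq_inv_poch he N n k hk0 h2
  have c1 : Deq N ((pochP e k.toNat)⁻¹) ((Pn e)⁻¹) :=
    Deq.inv (by rw [constCoeff_pochP he]; norm_num) (by rw [constCoeff_Pn he]; norm_num)
      (pochP_deq he N h1)
  exact c0.trans c1

/-! ### the theta function -/

noncomputable def thterm (s : ℕ) (j : ℤ) : PS := sgP j * q ^ ((Es s j).toNat)

noncomputable def thsum (s : ℕ) (M : ℕ) : PS := ∑ j ∈ Finset.Icc (-(M:ℤ)) (M:ℤ), thterm s j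

noncomputable def ZP (s : ℕ) : PS :=
  PowerSeries.mk fun N => PowerSeries.coeff (R := ℚ) N (thsum s (N+1))

lemma Es_big {s : ℕ} (hs : s ≤ 1) {N : ℕ} {j : ℤ} (hj : j < -(N:ℤ)-1 ∨ (N:ℤ)+1 < j) :
    (N:ℤ) + 1 ≤ Es s j := by
  have h := Es_two s j
  rcases hj with hj | hj
  · nlinarith
  · nlinarith

lemma thterm_dvd {s : ℕ} (hs : s ≤ 1) {N : ℕ} {j : ℤ} (hj : j < -(N:ℤ)-1 ∨ (N:ℤ)+1 < j) :
    PowerSeries.X ^ (N+1) ∣ thterm s j := by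
  unfold thterm
  refine Dvd.dvd.mul_left ?_ _
  have h := Es_big hs hj
  refine pow_dvd_pow _ ?_
  omega

lemma thsum_deq {s : ℕ} (hs : s ≤ 1) (N : ℕ) {M : ℕ} (hM : N+1 ≤ M) :
    Deq N (thsum s M) (ZP s) := by
  refine Deq_of_coeff fun k hk => ?_
  have h1 : Deq k (thsum s M) (thsum s (k+1)) := by
    refine sum_deq_subset (by intro x hx; simp only [Finset.mem_Icc] at *; omega) ?_
    intro j hj hnj
    simp only [Finset.mem_Icc] at hj hnj
    push_cast at hj hnj
    exact thterm_dvd hs (by omega)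
  rw [h1.coeff le_rfl, ZP, PowerSeries.coeff_mk]

/-! ### the limits -/

lemma rr_dvd (s : ℕ) (m : ℕ) : PowerSeries.X ^ m ∣ (q ^ (m^2 + s*m) * (poch m)⁻¹) := by
  refine Dvd.dvd.mul_right ?_ _
  rw [show (q:PS) = PowerSeries.X from rfl]
  exact pow_dvd_pow _ (le_trans (Nat.le_self_pow (by norm_num) m) (Nat.le_add_right _ _))

noncomputable def Lrr (s : ℕ) : PS := SumLim (fun k => q ^ (k^2 + s*k) * (poch k)⁻¹)

lemma hasSum_rr (s : ℕ) : HasSum (fun k => q ^ (k^2 + s*k) * (poch k)⁻¹) (Lrr s) :=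
  hasSum_of (rr_dvd s)

noncomputable def Fc (s : ℕ) : ℕ → PS :=
  fun n => ∑ k ∈ Finset.range (n+1), q^(k^2 + s*k) * gbP 1 (n-k) (k:ℤ)

lemma tendsto_Fc_L (s : ℕ) : Filter.Tendsto (Fc s) Filter.atTop (nhds (Lrr s)) := by
  apply tendsto_of_forall_deq
  intro N
  rw [Filter.eventually_atTop]
  refine ⟨3*N+4, fun n hn => ?_⟩
  have d1 : Deq N (Fc s n) (∑ k ∈ Finset.range (N+1), q^(k^2 + s*k) * gbP 1 (n-k) (k:ℤ)) := by
    refine sum_deq_subset (by intro x hx; simp only [Finset.mem_range] at *; omega) ?_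
    intro k hk hnk
    simp only [Finset.mem_range] at hk hnk
    refine Dvd.dvd.mul_right ?_ _
    rw [show (q:PS) = PowerSeries.X from rfl]
    refine pow_dvd_pow _ ?_
    have : k ≤ k^2 := Nat.le_self_pow (by norm_num) k
    omega
  have d2 : Deq N (∑ k ∈ Finset.range (N+1), q^(k^2 + s*k) * gbP 1 (n-k) (k:ℤ))
      (∑ k ∈ Finset.range (N+1), q^(k^2 + s*k) * (poch k)⁻¹) := by
    refine Deq.sum fun k hk => ?_
    simp only [Finset.mem_range] at hk
    refine (Deq.refl N _).mul ?_
    have h := gbP_deq_inv_poch le_rfl N (n-k) (k:ℤ) (by positivity) (by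
      rw [Int.toNat_natCast]; omega)
    rwa [Int.toNat_natCast, ← poch_eq_pochP] at h
  exact (d1.trans d2).trans (SumLim_deq (rr_dvd s) N le_rfl)

lemma tendsto_Fc_Z {s : ℕ} (hs : s ≤ 1) :
    Filter.Tendsto (Fc s) Filter.atTop (nhds (ZP s * (Pn 1)⁻¹)) := by
  apply tendsto_of_forall_deq
  intro N
  rw [Filter.eventually_atTop]
  refine ⟨8*N+20, fun n hn => ?_⟩
  rw [show Fc s n = _ from cP_eq_SchP hs n]
  have d1 : Deq N (∑ j ∈ Finset.Icc (-(n:ℤ)-1) ((n:ℤ)+1),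
        sgP j * q^((Es s j).toNat) * gbP 1 (n+s) (((n:ℤ) - 5*j)/2))
      (∑ j ∈ Finset.Icc (-(N:ℤ)-1) ((N:ℤ)+1),
        sgP j * q^((Es s j).toNat) * gbP 1 (n+s) (((n:ℤ) - 5*j)/2)) := by
    refine sum_deq_subset (by intro x hx; simp only [Finset.mem_Icc] at *; omega) ?_
    intro j hj hnj
    simp only [Finset.mem_Icc] at hj hnj
    exact Dvd.dvd.mul_right (thterm_dvd hs (by omega)) _
  have d2 : Deq N (∑ j ∈ Finset.Icc (-(N:ℤ)-1) ((N:ℤ)+1),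
        sgP j * q^((Es s j).toNat) * gbP 1 (n+s) (((n:ℤ) - 5*j)/2))
      (∑ j ∈ Finset.Icc (-(N:ℤ)-1) ((N:ℤ)+1), thterm s j * (Pn 1)⁻¹) := by
    refine Deq.sum fun j hj => ?_
    simp only [Finset.mem_Icc] at hj
    refine (Deq.refl N (thterm s j)).mul ?_
    exact gbP_deq_Pinv le_rfl N (n+s) _ (by omega) (by omega) (by omega)
  have d3 : (∑ j ∈ Finset.Icc (-(N:ℤ)-1) ((N:ℤ)+1), thterm s j * (Pn 1)⁻¹)
      = thsum s (N+1) * (Pn 1)⁻¹ := by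
    rw [thsum, Finset.sum_mul]
    congr 1
    · congr 1 <;> push_cast <;> ring
  have d4 : Deq N (thsum s (N+1) * (Pn 1)⁻¹) (ZP s * (Pn 1)⁻¹) :=
    (thsum_deq hs N le_rfl).mul (Deq.refl N _)
  exact ((d1.trans d2).trans (by rw [d3]; exact d4))

lemma identA {s : ℕ} (hs : s ≤ 1) : Lrr s = ZP s * (Pn 1)⁻¹ :=
  tendsto_nhds_unique (tendsto_Fc_L s) (tendsto_Fc_Z hs)

/-! ### the product limit -/

noncomputable def uB (s : ℕ) : ℕ → PS :=
  fun i => (1 - q^(5*(i+1) - (3+s))) * (1 - q^(5*(i+1) - 2 + s))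

lemma huB {s : ℕ} (hs : s ≤ 1) (i : ℕ) : PowerSeries.X ^ (i+1) ∣ (uB s i - 1) := by
  have key : uB s i - 1
      = q^(5*(i+1) - (3+s)) * q^(5*(i+1) - 2 + s) - q^(5*(i+1) - (3+s)) - q^(5*(i+1) - 2 + s) := by
    unfold uB; ring
  rw [key, show (q:PS) = PowerSeries.X from rfl]
  have hx : PowerSeries.X ^ (i+1) ∣ (PowerSeries.X : PS) ^ (5*(i+1) - (3+s)) :=
    pow_dvd_pow _ (by omega)
  have hy : PowerSeries.X ^ (i+1) ∣ (PowerSeries.X : PS) ^ (5*(i+1) - 2 + s) :=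
    pow_dvd_pow _ (by omega)
  exact dvd_sub (dvd_sub (hx.mul_right _) hx) hy

noncomputable def PB (s : ℕ) : PS := Lim (uB s)

noncomputable def Gc (s : ℕ) : ℕ → PS :=
  fun n => ∑ j ∈ Finset.Icc (-(n:ℤ)) (n:ℤ), sgP j * q^((Es s j).toNat) * gbP 5 (2*n) ((n:ℤ)+j)

lemma tendsto_Gc_Z {s : ℕ} (hs : s ≤ 1) :
    Filter.Tendsto (Gc s) Filter.atTop (nhds (ZP s * (Pn 5)⁻¹)) := by
  apply tendsto_of_forall_deq
  intro N
  rw [Filter.eventually_atTop]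
  refine ⟨2*N+4, fun n hn => ?_⟩
  have d1 : Deq N (Gc s n)
      (∑ j ∈ Finset.Icc (-(N:ℤ)-1) ((N:ℤ)+1),
        sgP j * q^((Es s j).toNat) * gbP 5 (2*n) ((n:ℤ)+j)) := by
    refine sum_deq_subset (by intro x hx; simp only [Finset.mem_Icc] at *; omega) ?_
    intro j hj hnj
    simp only [Finset.mem_Icc] at hj hnj
    exact Dvd.dvd.mul_right (thterm_dvd hs (by omega)) _
  have d2 : Deq N (∑ j ∈ Finset.Icc (-(N:ℤ)-1) ((N:ℤ)+1),
        sgP j * q^((Es s j).toNat) * gbP 5 (2*n) ((n:ℤ)+j))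
      (∑ j ∈ Finset.Icc (-(N:ℤ)-1) ((N:ℤ)+1), thterm s j * (Pn 5)⁻¹) := by
    refine Deq.sum fun j hj => ?_
    simp only [Finset.mem_Icc] at hj
    refine (Deq.refl N (thterm s j)).mul ?_
    exact gbP_deq_Pinv (by norm_num) N (2*n) _ (by omega) (by omega) (by omega)
  have d3 : (∑ j ∈ Finset.Icc (-(N:ℤ)-1) ((N:ℤ)+1), thterm s j * (Pn 5)⁻¹)
      = thsum s (N+1) * (Pn 5)⁻¹ := by
    rw [thsum, Finset.sum_mul]
    congr 1
    · congr 1 <;> push_cast <;> ring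
  have d4 : Deq N (thsum s (N+1) * (Pn 5)⁻¹) (ZP s * (Pn 5)⁻¹) :=
    (thsum_deq hs N le_rfl).mul (Deq.refl N _)
  exact ((d1.trans d2).trans (by rw [d3]; exact d4))

lemma tendsto_Gc_PB {s : ℕ} (hs : s ≤ 1) :
    Filter.Tendsto (Gc s) Filter.atTop (nhds (PB s)) := by
  apply tendsto_of_forall_deq
  intro N
  rw [Filter.eventually_atTop]
  refine ⟨N+1, fun n hn => ?_⟩
  rw [show Gc s n = _ from jtpP hs n]
  exact Lim_deq (huB hs) N hn

lemma identB {s : ℕ} (hs : s ≤ 1) : ZP s = PB s * Pn 5 := by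
  have h1 : ZP s * (Pn 5)⁻¹ = PB s := tendsto_nhds_unique (tendsto_Gc_Z hs) (tendsto_Gc_PB hs)
  have h2 : Pn 5 * (Pn 5)⁻¹ = 1 :=
    PowerSeries.mul_inv_cancel _ (by rw [constCoeff_Pn (by norm_num)]; norm_num)
  calc ZP s = ZP s * ((Pn 5) * (Pn 5)⁻¹) := by rw [h2, mul_one]
    _ = (ZP s * (Pn 5)⁻¹) * Pn 5 := by ring
    _ = PB s * Pn 5 := by rw [h1]

/-! ### splitting the full product into classes mod 5 -/

noncomputable def uC (s : ℕ) : ℕ → PS :=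
  fun m => if (m+1) % 5 = s+1 ∨ (m+1) % 5 = 4 - s then 1 - q^(m+1) else 1

noncomputable def uA : ℕ → PS := fun m => if (m+1) % 5 = 0 then 1 - q^(m+1) else 1

noncomputable def uBm (s : ℕ) : ℕ → PS :=
  fun m => if (m+1) % 5 = 2 - s ∨ (m+1) % 5 = 3 + s then 1 - q^(m+1) else 1

lemma hu_if (p : Prop) [Decidable p] (m : ℕ) :
    PowerSeries.X ^ (m+1) ∣ ((if p then 1 - q^(m+1) else 1) - 1) := by
  by_cases h : p
  · rw [if_pos h, sub_sub_cancel_left, dvd_neg, show (q:PS) = PowerSeries.X from rfl]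
  · rw [if_neg h, sub_self]
    exact dvd_zero _

lemma huC (s : ℕ) (m : ℕ) : PowerSeries.X ^ (m+1) ∣ (uC s m - 1) := by
  unfold uC; exact hu_if _ m
lemma huA (m : ℕ) : PowerSeries.X ^ (m+1) ∣ (uA m - 1) := by
  unfold uA; exact hu_if _ m
lemma huBm (s : ℕ) (m : ℕ) : PowerSeries.X ^ (m+1) ∣ (uBm s m - 1) := by
  unfold uBm; exact hu_if _ m

noncomputable def PC (s : ℕ) : PS := Lim (uC s)
noncomputable def PA : PS := Lim uA
noncomputable def PBm (s : ℕ) : PS := Lim (uBm s)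

lemma hfactor {s : ℕ} (hs : s ≤ 1) (m : ℕ) : uP 1 m = uBm s m * (uC s m * uA m) := by
  have h1 : uP 1 m = 1 - q^(m+1) := by unfold uP; rw [one_mul]
  rcases (by omega : s = 0 ∨ s = 1) with rfl | rfl <;>
  · rcases (by omega : (m+1) % 5 = 0 ∨ (m+1) % 5 = 1 ∨ (m+1) % 5 = 2 ∨ (m+1) % 5 = 3
        ∨ (m+1) % 5 = 4) with h|h|h|h|h <;>
      simp [h1, uBm, uC, uA, h]

lemma identC {s : ℕ} (hs : s ≤ 1) : Pn 1 = PBm s * (PC s * PA) := by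
  refine eq_of_forall_deq fun N => ?_
  have h0 : Deq N (Pn 1) (pochP 1 (N+1)) := (pochP_deq le_rfl N le_rfl).symm
  have h1 : pochP 1 (N+1)
      = (∏ m ∈ Finset.range (N+1), uBm s m) *
        ((∏ m ∈ Finset.range (N+1), uC s m) * (∏ m ∈ Finset.range (N+1), uA m)) := by
    rw [pochP_eq_prod, Finset.prod_congr rfl (fun m _ => hfactor hs m),
      Finset.prod_mul_distrib, Finset.prod_mul_distrib]
  have h2 : Deq N ((∏ m ∈ Finset.range (N+1), uBm s m) *
        ((∏ m ∈ Finset.range (N+1), uC s m) * (∏ m ∈ Finset.range (N+1), uA m)))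
      (PBm s * (PC s * PA)) :=
    (Lim_deq (huBm s) N le_rfl).mul ((Lim_deq (huC s) N le_rfl).mul (Lim_deq huA N le_rfl))
  exact h0.trans (by rw [h1]; exact h2)

lemma block_B {s : ℕ} (hs : s ≤ 1) (M : ℕ) :
    ∏ m ∈ Finset.range (5*M), uBm s m = ∏ i ∈ Finset.range M, uB s i := by
  induction M with
  | zero => simp
  | succ M ih =>
    rw [show 5*(M+1) = 5*M + 5 from by ring, Finset.prod_range_add, ih,
      Finset.prod_range_succ (n := M)]
    congr 1
    rw [show (5:ℕ) = 4+1 from rfl, Finset.prod_range_succ, Finset.prod_range_succ,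
      Finset.prod_range_succ, Finset.prod_range_succ, Finset.prod_range_one]
    rcases (by omega : s = 0 ∨ s = 1) with rfl | rfl
    · unfold uBm uB
      rw [if_neg (by omega), if_pos (by omega), if_pos (by omega),
        if_neg (by omega), if_neg (by omega)]
      rw [show 5*(M+1) - (3+0) = 5*M+1+1 from by omega,
        show 5*(M+1) - 2 + 0 = 5*M+2+1 from by omega]
      ring
    · unfold uBm uB
      rw [if_pos (by omega), if_neg (by omega), if_neg (by omega),
        if_pos (by omega), if_neg (by omega)]
      rw [show 5*(M+1) - (3+1) = 5*M+0+1 from by omega,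
        show 5*(M+1) - 2 + 1 = 5*M+3+1 from by omega]
      ring

lemma block_A (M : ℕ) : ∏ m ∈ Finset.range (5*M), uA m = ∏ i ∈ Finset.range M, uP 5 i := by
  induction M with
  | zero => simp
  | succ M ih =>
    rw [show 5*(M+1) = 5*M + 5 from by ring, Finset.prod_range_add, ih,
      Finset.prod_range_succ (n := M)]
    congr 1
    rw [show (5:ℕ) = 4+1 from rfl, Finset.prod_range_succ, Finset.prod_range_succ,
      Finset.prod_range_succ, Finset.prod_range_succ, Finset.prod_range_one]
    unfold uA uP
    rw [if_neg (by omega), if_neg (by omega), if_neg (by omega),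
      if_neg (by omega), if_pos (by omega)]
    rw [show 5*(M+1) = 5*M+4+1 from by omega]
    ring

lemma identD {s : ℕ} (hs : s ≤ 1) : PBm s = PB s := by
  refine eq_of_forall_deq fun N => ?_
  have h1 : Deq N (∏ m ∈ Finset.range (5*(N+1)), uBm s m) (PBm s) :=
    Lim_deq (huBm s) N (by omega)
  have h2 : Deq N (∏ i ∈ Finset.range (N+1), uB s i) (PB s) := Lim_deq (huB hs) N le_rfl
  rw [block_B hs (N+1)] at h1
  exact (h1.symm).trans h2

lemma identE : PA = Pn 5 := by
  refine eq_of_forall_deq fun N => ?_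
  have h1 : Deq N (∏ m ∈ Finset.range (5*(N+1)), uA m) PA := Lim_deq huA N (by omega)
  have h2 : Deq N (∏ i ∈ Finset.range (N+1), uP 5 i) (Pn 5) :=
    Lim_deq (huP (by norm_num)) N le_rfl
  rw [block_A (N+1)] at h1
  exact (h1.symm).trans h2

/-! ### the right-hand side -/

lemma constCoeff_one_sub_qpow {m : ℕ} (hm : 1 ≤ m) :
    PowerSeries.constantCoeff (R := ℚ) (1 - q^m) = 1 := by
  rw [show (q:PS) = PowerSeries.X from rfl, map_sub, map_one, map_pow,
    PowerSeries.constantCoeff_X, zero_pow (by omega), sub_zero]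

lemma constCoeff_uC (s m : ℕ) : PowerSeries.constantCoeff (R := ℚ) (uC s m) = 1 := by
  unfold uC
  split
  · exact constCoeff_one_sub_qpow (by omega)
  · exact map_one _

lemma constCoeff_prod_uC (s : ℕ) (S : Finset ℕ) :
    PowerSeries.constantCoeff (R := ℚ) (∏ m ∈ S, uC s m) = 1 := by
  rw [map_prod]
  exact Finset.prod_eq_one fun m _ => constCoeff_uC s m

lemma constCoeff_PC (s : ℕ) : PowerSeries.constantCoeff (R := ℚ) (PC s) = 1 := by
  rw [PC, constCoeff_Lim, constCoeff_uC]

lemma prod_rhs_eq (s : ℕ) (S : Finset ℕ) :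
    ∏ m ∈ S, (if (m+1) % 5 = s+1 ∨ (m+1) % 5 = 4 - s then (1 - q^(m+1))⁻¹ else 1)
      = (∏ m ∈ S, uC s m)⁻¹ := by
  refine (PowerSeries.eq_inv_iff_mul_eq_one (by rw [constCoeff_prod_uC]; norm_num)).2 ?_
  rw [← Finset.prod_mul_distrib]
  refine Finset.prod_eq_one fun m _ => ?_
  unfold uC
  by_cases h : (m+1) % 5 = s+1 ∨ (m+1) % 5 = 4 - s
  · rw [if_pos h, if_pos h, mul_comm]
    exact PowerSeries.mul_inv_cancel _ (by rw [constCoeff_one_sub_qpow (by omega)]; norm_num)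
  · rw [if_neg h, if_neg h, mul_one]

lemma hasProd_rhs (s : ℕ) :
    HasProd (fun n => if (n+1) % 5 = s+1 ∨ (n+1) % 5 = 4 - s then (1 - q^(n+1))⁻¹ else 1)
      ((PC s)⁻¹) := by
  rw [HasProd]
  apply tendsto_of_forall_deq
  intro N
  rw [SummationFilter.unconditional_filter, Filter.eventually_atTop]
  refine ⟨Finset.range (N+1), fun S hS => ?_⟩
  rw [prod_rhs_eq s S]
  have hsub : Finset.range (N+1) ⊆ S := Finset.le_iff_subset.1 hS
  have h1 : Deq N (∏ m ∈ S, uC s m) (PC s) := by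
    refine Deq.trans (prod_deq_subset hsub ?_) (Lim_deq (huC s) N le_rfl)
    intro m hm hnm
    simp only [Finset.mem_range] at hnm
    exact dvd_trans (pow_dvd_pow _ (by omega)) (huC s m)
  exact Deq.inv (by rw [constCoeff_prod_uC]; norm_num) (by rw [constCoeff_PC]; norm_num) h1

lemma constCoeff_PB {s : ℕ} (hs : s ≤ 1) : PowerSeries.constantCoeff (R := ℚ) (PB s) = 1 := by
  rw [PB, constCoeff_Lim]
  unfold uB
  rw [map_mul, constCoeff_one_sub_qpow (by omega), constCoeff_one_sub_qpow (by omega), mul_one]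

/-- For `s = 0, 1`:
`∑_{n ≥ 0} q^(n² + s n)/(q;q)_n = ∏_{n ≥ 1, n ≡ ±(s+1) mod 5} 1/(1 - q^n)`. -/
theorem rogers_ramanujan (s : ℕ) (hs : s ≤ 1) :
    (∑' n : ℕ, q ^ (n ^ 2 + s * n) * (poch n)⁻¹) =
      ∏' n : ℕ,
        (if (n + 1) % 5 = s + 1 ∨ (n + 1) % 5 = 4 - s then (1 - q ^ (n + 1))⁻¹ else 1) := by
  rw [(hasSum_rr s).tsum_eq, (hasProd_rhs s).tprod_eq]
  rw [identA hs, identB hs, identC hs, identD hs, identE]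
  have hB1 : PB s * (PB s)⁻¹ = 1 :=
    PowerSeries.mul_inv_cancel _ (by rw [constCoeff_PB hs]; norm_num)
  have h51 : Pn 5 * (Pn 5)⁻¹ = 1 :=
    PowerSeries.mul_inv_cancel _ (by rw [constCoeff_Pn (by norm_num)]; norm_num)
  rw [PowerSeries.mul_inv_rev, PowerSeries.mul_inv_rev]
  linear_combination ((PC s)⁻¹ * (Pn 5 * (Pn 5)⁻¹)) * hB1 + (PC s)⁻¹ * h51
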